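/- Let L = ⊕_{n∈ℤ} V_n be the graded Lie algebra associated with a standard pentad, and let α_i : V_i → V_i for i = 0, ±1 be linear maps satisfying α_{i+j}([a_i, b_j]) = [α_i(a_i), b_j] + [a_i, α_j(b_j)] for all -1 ≤ i, j, i+j ≤ 1 and a_i ∈ V_i, b_j ∈ V_j. Then there exists a derivation α of L whose restriction to V_i equals α_i for i = 0, ±1. -/

import Mathlib

/-- A **standard pentad** `(g, ρ, V, 𝒱, B₀)` in the abstract-dual formulation: a Lie algebra
`g` with a non-degenerate invariant bilinear form `B`, representations `ρ` on `V` and `ϱ`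
on `W` (with `W` playing the role of the `g`-submodule `𝒱 ⊆ Hom(V, k)`, realized via the
non-degenerate pairing `pair`, so that `ϱ` is the canonical dual action), together with a
Φ-map `Φ`. -/
structure PentadStruct (k g V W : Type*) [Field k] [LieRing g] [LieAlgebra k g]
    [AddCommGroup V] [Module k V] [AddCommGroup W] [Module k W] where
  ρ : g →ₗ[k] V →ₗ[k] V
  rep_ρ : ∀ a b : g, ρ ⁅a, b⁆ = ρ a ∘ₗ ρ b - ρ b ∘ₗ ρ a
  ϱ : g →ₗ[k] W →ₗ[k] W
  rep_ϱ : ∀ a b : g, ϱ ⁅a, b⁆ = ϱ a ∘ₗ ϱ b - ϱ b ∘ₗ ϱ a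
  pair : V →ₗ[k] W →ₗ[k] k
  pair_compat : ∀ (a : g) (v : V) (w : W), pair (ρ a v) w = - pair v (ϱ a w)
  pair_nondeg_left : ∀ v : V, (∀ w : W, pair v w = 0) → v = 0
  pair_nondeg_right : ∀ w : W, (∀ v : V, pair v w = 0) → w = 0
  B : g →ₗ[k] g →ₗ[k] k
  B_nondeg_left : ∀ a : g, (∀ b : g, B a b = 0) → a = 0
  B_nondeg_right : ∀ b : g, (∀ a : g, B a b = 0) → b = 0
  B_invariant : ∀ a b c : g, B ⁅a, b⁆ c = B a ⁅b, c⁆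
  Φ : V →ₗ[k] W →ₗ[k] g
  Φ_compat : ∀ (a : g) (v : V) (w : W), B a (Φ v w) = pair (ρ a v) w

/-- The graded Lie algebra `L(g, ρ, V, 𝒱, B₀) = ⊕ₙ Vₙ` associated with a standard pentad,
characterized by its defining properties: it is ℤ-graded, its degrees `0`, `1`, `-1` are the
images of `g`, `V`, `𝒱` (compatibly with the Lie structures and the Φ-map), the higher graded
pieces satisfy `V_{i+1} = [V₁, V_i]`, `V_{-i-1} = [V₋₁, V₋ᵢ]` for `i ≥ 1`, and elements of
`Vₙ`, `|n| ≥ 2`, are by construction (as homomorphisms) determined by their brackets with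
`V_{∓1}`. -/
structure AssocGradedLieAlgebra (k g V W : Type*) [Field k] [LieRing g] [LieAlgebra k g]
    [AddCommGroup V] [Module k V] [AddCommGroup W] [Module k W]
    (P : PentadStruct k g V W) (L : Type*) [LieRing L] [LieAlgebra k L] where
  grading : ℤ → Submodule k L
  isInternal : DirectSum.IsInternal grading
  lie_mem : ∀ (n m : ℤ), ∀ x ∈ grading n, ∀ y ∈ grading m, ⁅x, y⁆ ∈ grading (n + m)
  ιg : g →ₗ[k] L
  ιV : V →ₗ[k] L
  ιW : W →ₗ[k] L
  ιg_inj : Function.Injective ιg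
  ιV_inj : Function.Injective ιV
  ιW_inj : Function.Injective ιW
  ιg_range : LinearMap.range ιg = grading 0
  ιV_range : LinearMap.range ιV = grading 1
  ιW_range : LinearMap.range ιW = grading (-1)
  ιg_lie : ∀ a b : g, ιg ⁅a, b⁆ = ⁅ιg a, ιg b⁆
  lie_ιV : ∀ (a : g) (v : V), ⁅ιg a, ιV v⁆ = ιV (P.ρ a v)
  lie_ιW : ∀ (a : g) (w : W), ⁅ιg a, ιW w⁆ = ιW (P.ϱ a w)
  lie_Φ : ∀ (v : V) (w : W), ⁅ιV v, ιW w⁆ = ιg (P.Φ v w)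
  span_pos : ∀ i : ℤ, 1 ≤ i → grading (i + 1)
    = Submodule.span k {z : L | ∃ x ∈ grading 1, ∃ y ∈ grading i, z = ⁅x, y⁆}
  span_neg : ∀ i : ℤ, 1 ≤ i → grading (-i - 1)
    = Submodule.span k {z : L | ∃ x ∈ grading (-1), ∃ y ∈ grading (-i), z = ⁅x, y⁆}
  trans_pos : ∀ n : ℤ, 2 ≤ n → ∀ x ∈ grading n, (∀ y ∈ grading (-1), ⁅x, y⁆ = 0) → x = 0
  trans_neg : ∀ n : ℤ, 2 ≤ n → ∀ x ∈ grading (-n), (∀ y ∈ grading 1, ⁅x, y⁆ = 0) → x = 0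

set_option maxHeartbeats 1000000

section S13Aux

variable {k g V W L : Type*} [Field k] [LieRing g] [LieAlgebra k g]
    [AddCommGroup V] [Module k V] [AddCommGroup W] [Module k W]
    [LieRing L] [LieAlgebra k L] {P : PentadStruct k g V W}

open TensorProduct

/-- A family of candidate degreewise maps. -/
def S13Fam (A : AssocGradedLieAlgebra k g V W P L) : Type _ :=
  ∀ n : ℤ, ↥(A.grading n) →ₗ[k] L

/-- Derivation identity in bidegree `(i, j)`. -/
def S13Der (A : AssocGradedLieAlgebra k g V W P L) (β : S13Fam A) (i j : ℤ) : Prop :=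
  ∀ (a : ↥(A.grading i)) (b : ↥(A.grading j)) (h : ⁅(a : L), (b : L)⁆ ∈ A.grading (i + j)),
    β (i + j) ⟨⁅(a : L), (b : L)⁆, h⟩ = ⁅β i a, (b : L)⁆ + ⁅(a : L), β j b⁆

theorem s13_congr (A : AssocGradedLieAlgebra k g V W P L) (β : S13Fam A) {n m : ℤ}
    (e : n = m) (x : L) (hx : x ∈ A.grading n) (hx' : x ∈ A.grading m) :
    β n ⟨x, hx⟩ = β m ⟨x, hx'⟩ := by subst e; rfl

/-- The full inductive invariant at level `N`. -/
def S13Cond (A : AssocGradedLieAlgebra k g V W P L)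
    (α₀ : ↥(A.grading 0) →ₗ[k] ↥(A.grading 0))
    (α₁ : ↥(A.grading 1) →ₗ[k] ↥(A.grading 1))
    (αm : ↥(A.grading (-1)) →ₗ[k] ↥(A.grading (-1)))
    (β : S13Fam A) (N : ℕ) : Prop :=
  (∀ (n : ℤ) (x : ↥(A.grading n)), β n x ∈ A.grading n) ∧
  (∀ x, β 0 x = ↑(α₀ x)) ∧ (∀ x, β 1 x = ↑(α₁ x)) ∧ (∀ x, β (-1) x = ↑(αm x)) ∧
  (∀ i j : ℤ, (i.natAbs ≤ 1 ∨ j.natAbs ≤ 1) → i.natAbs ≤ N → j.natAbs ≤ N →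
    (i + j).natAbs ≤ N → S13Der A β i j)

theorem s13_flip (A : AssocGradedLieAlgebra k g V W P L) (β : S13Fam A) {i j : ℤ}
    (H : S13Der A β i j) : S13Der A β j i := by
  intro b a h
  have e : j + i = i + j := add_comm j i
  have h2 : ⁅(a : L), (b : L)⁆ ∈ A.grading (i + j) := by
    rw [← e, ← lie_skew]
    exact neg_mem h
  have hsub : (⟨⁅(b : L), (a : L)⁆, e ▸ h⟩ : A.grading (i + j))
      = -⟨⁅(a : L), (b : L)⁆, h2⟩ := by
    apply Subtype.ext
    show ⁅(b : L), (a : L)⁆ = -⁅(a : L), (b : L)⁆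
    exact (lie_skew _ _).symm
  calc β (j + i) ⟨⁅(b : L), (a : L)⁆, h⟩
      = β (i + j) ⟨⁅(b : L), (a : L)⁆, e ▸ h⟩ := s13_congr A β e _ h _
    _ = β (i + j) (-⟨⁅(a : L), (b : L)⁆, h2⟩) := by rw [hsub]
    _ = -(β (i + j) ⟨⁅(a : L), (b : L)⁆, h2⟩) := map_neg _ _
    _ = -(⁅β i a, (b : L)⁆ + ⁅(a : L), β j b⁆) := by rw [H a b h2]
    _ = ⁅β j b, (a : L)⁆ + ⁅(b : L), β i a⁆ := by
        rw [neg_add, lie_skew ((b : L)) (β i a), lie_skew (β j b) ((a : L)), add_comm]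

/-- The key Jacobi computation: the would-be value of the extended map on a
generator `⁅u, x⁆` satisfies the expected bracket relation with elements of
opposite small degree. -/
theorem s13_key (A : AssocGradedLieAlgebra k g V W P L)
    {α₀ : ↥(A.grading 0) →ₗ[k] ↥(A.grading 0)}
    {α₁ : ↥(A.grading 1) →ₗ[k] ↥(A.grading 1)}
    {αm : ↥(A.grading (-1)) →ₗ[k] ↥(A.grading (-1))}
    {β : S13Fam A} {N : ℕ} (hN : 1 ≤ N)
    (hC : S13Cond A α₀ α₁ αm β N) {p q : ℤ}
    (hp : p.natAbs ≤ 1) (hq : q.natAbs ≤ N) (hq' : (q + -p).natAbs ≤ N)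
    (u : ↥(A.grading p)) (x : ↥(A.grading q)) (y : ↥(A.grading (-p)))
    (h : ⁅⁅(u : L), (x : L)⁆, (y : L)⁆ ∈ A.grading q) :
    ⁅⁅β p u, (x : L)⁆ + ⁅(u : L), β q x⁆, (y : L)⁆
      = β q ⟨⁅⁅(u : L), (x : L)⁆, (y : L)⁆, h⟩ - ⁅⁅(u : L), (x : L)⁆, β (-p) y⁆ := by
  obtain ⟨hmem, -, -, -, der⟩ := hC
  have hpN : p.natAbs ≤ N := hp.trans hN
  have hmp : (-p).natAbs ≤ 1 := by omega
  have huy : ⁅(u : L), (y : L)⁆ ∈ A.grading (p + -p) := A.lie_mem _ _ _ u.2 _ y.2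
  have hxy : ⁅(x : L), (y : L)⁆ ∈ A.grading (q + -p) := A.lie_mem _ _ _ x.2 _ y.2
  have i1 : β (p + -p) ⟨⁅(u : L), (y : L)⁆, huy⟩ = ⁅β p u, (y : L)⁆ + ⁅(u : L), β (-p) y⁆ :=
    der p (-p) (Or.inl hp) hpN (by omega) (by omega) u y huy
  have i2 : β (q + -p) ⟨⁅(x : L), (y : L)⁆, hxy⟩ = ⁅β q x, (y : L)⁆ + ⁅(x : L), β (-p) y⁆ :=
    der q (-p) (Or.inr hmp) hq (by omega) hq' x y hxy
  have hu_xy : ⁅(u : L), ⁅(x : L), (y : L)⁆⁆ ∈ A.grading (p + (q + -p)) :=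
    A.lie_mem _ _ _ u.2 _ hxy
  have i3 : β (p + (q + -p)) ⟨⁅(u : L), ⁅(x : L), (y : L)⁆⁆, hu_xy⟩
      = ⁅β p u, ⁅(x : L), (y : L)⁆⁆ + ⁅(u : L), β (q + -p) ⟨⁅(x : L), (y : L)⁆, hxy⟩⁆ :=
    der p (q + -p) (Or.inl hp) hpN hq' (by omega) u ⟨⁅(x : L), (y : L)⁆, hxy⟩ hu_xy
  have huy_x : ⁅⁅(u : L), (y : L)⁆, (x : L)⁆ ∈ A.grading ((p + -p) + q) :=
    A.lie_mem _ _ _ huy _ x.2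
  have i4 : β ((p + -p) + q) ⟨⁅⁅(u : L), (y : L)⁆, (x : L)⁆, huy_x⟩
      = ⁅β (p + -p) ⟨⁅(u : L), (y : L)⁆, huy⟩, (x : L)⁆ + ⁅⁅(u : L), (y : L)⁆, β q x⁆ :=
    der (p + -p) q (Or.inl (by omega)) (by omega) hq (by omega) ⟨⁅(u : L), (y : L)⁆, huy⟩ x huy_x
  have e : ⁅⁅(u : L), (x : L)⁆, (y : L)⁆
      = ⁅(u : L), ⁅(x : L), (y : L)⁆⁆ + ⁅⁅(u : L), (y : L)⁆, (x : L)⁆ := by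
    rw [lie_lie, sub_eq_add_neg, lie_skew]
  have m1 : ⁅(u : L), ⁅(x : L), (y : L)⁆⁆ ∈ A.grading q := by
    have := hu_xy; rwa [show p + (q + -p) = q by ring] at this
  have m2 : ⁅⁅(u : L), (y : L)⁆, (x : L)⁆ ∈ A.grading q := by
    have := huy_x; rwa [show (p + -p) + q = q by ring] at this
  have hsplit : (⟨⁅⁅(u : L), (x : L)⁆, (y : L)⁆, h⟩ : A.grading q)
      = ⟨⁅(u : L), ⁅(x : L), (y : L)⁆⁆, m1⟩ + ⟨⁅⁅(u : L), (y : L)⁆, (x : L)⁆, m2⟩ := by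
    apply Subtype.ext; exact e
  rw [hsplit, map_add,
    s13_congr A β (show q = p + (q + -p) by ring) _ m1 hu_xy,
    s13_congr A β (show q = (p + -p) + q by ring) _ m2 huy_x, i3, i4,
    ← lie_skew (β (p + -p) ⟨⁅(u : L), (y : L)⁆, huy⟩) ((x : L)),
    ← lie_skew (⁅(u : L), (y : L)⁆) (β q x)]
  have i2' : ⁅β q x, (y : L)⁆
      = β (q + -p) ⟨⁅(x : L), (y : L)⁆, hxy⟩ - ⁅(x : L), β (-p) y⁆ := by rw [i2]; abel
  have i1' : ⁅β p u, (y : L)⁆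
      = β (p + -p) ⟨⁅(u : L), (y : L)⁆, huy⟩ - ⁅(u : L), β (-p) y⁆ := by rw [i1]; abel
  simp only [add_lie, lie_lie]
  simp only [i1', i2']
  simp only [lie_sub, sub_lie, lie_add, add_lie, lie_neg, neg_lie]
  abel

/-- Closure of the derivation identity under forming brackets in the second slot. -/
theorem s13_close (A : AssocGradedLieAlgebra k g V W P L) (β : S13Fam A) {i p q : ℤ}
    (c : ↥(A.grading i)) (u : ↥(A.grading p)) (x : ↥(A.grading q))
    (h1 : ∀ h, β (i + p) ⟨⁅(c : L), (u : L)⁆, h⟩ = ⁅β i c, (u : L)⁆ + ⁅(c : L), β p u⁆)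
    (h2 : ∀ h, β (i + q) ⟨⁅(c : L), (x : L)⁆, h⟩ = ⁅β i c, (x : L)⁆ + ⁅(c : L), β q x⁆)
    (h3 : ∀ (hcu : ⁅(c : L), (u : L)⁆ ∈ A.grading (i + p))
        (h : ⁅⁅(c : L), (u : L)⁆, (x : L)⁆ ∈ A.grading ((i + p) + q)),
      β ((i + p) + q) ⟨⁅⁅(c : L), (u : L)⁆, (x : L)⁆, h⟩
        = ⁅β (i + p) ⟨⁅(c : L), (u : L)⁆, hcu⟩, (x : L)⁆ + ⁅⁅(c : L), (u : L)⁆, β q x⁆)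
    (h4 : ∀ (hcx : ⁅(c : L), (x : L)⁆ ∈ A.grading (i + q))
        (h : ⁅(u : L), ⁅(c : L), (x : L)⁆⁆ ∈ A.grading (p + (i + q))),
      β (p + (i + q)) ⟨⁅(u : L), ⁅(c : L), (x : L)⁆⁆, h⟩
        = ⁅β p u, ⁅(c : L), (x : L)⁆⁆ + ⁅(u : L), β (i + q) ⟨⁅(c : L), (x : L)⁆, hcx⟩⁆)
    (hm : ⁅(u : L), (x : L)⁆ ∈ A.grading (p + q))
    (hval : β (p + q) ⟨⁅(u : L), (x : L)⁆, hm⟩ = ⁅β p u, (x : L)⁆ + ⁅(u : L), β q x⁆)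
    (h : ⁅(c : L), ⁅(u : L), (x : L)⁆⁆ ∈ A.grading (i + (p + q))) :
    β (i + (p + q)) ⟨⁅(c : L), ⁅(u : L), (x : L)⁆⁆, h⟩
      = ⁅β i c, ⁅(u : L), (x : L)⁆⁆ + ⁅(c : L), β (p + q) ⟨⁅(u : L), (x : L)⁆, hm⟩⁆ := by
  have hcu : ⁅(c : L), (u : L)⁆ ∈ A.grading (i + p) := A.lie_mem _ _ _ c.2 _ u.2
  have hcx : ⁅(c : L), (x : L)⁆ ∈ A.grading (i + q) := A.lie_mem _ _ _ c.2 _ x.2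
  have ma : ⁅⁅(c : L), (u : L)⁆, (x : L)⁆ ∈ A.grading ((i + p) + q) := A.lie_mem _ _ _ hcu _ x.2
  have mb : ⁅(u : L), ⁅(c : L), (x : L)⁆⁆ ∈ A.grading (p + (i + q)) := A.lie_mem _ _ _ u.2 _ hcx
  have ma' : ⁅⁅(c : L), (u : L)⁆, (x : L)⁆ ∈ A.grading (i + (p + q)) := by
    have := ma; rwa [show (i + p) + q = i + (p + q) by ring] at this
  have mb' : ⁅(u : L), ⁅(c : L), (x : L)⁆⁆ ∈ A.grading (i + (p + q)) := by
    have := mb; rwa [show p + (i + q) = i + (p + q) by ring] at this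
  have e : ⁅(c : L), ⁅(u : L), (x : L)⁆⁆
      = ⁅⁅(c : L), (u : L)⁆, (x : L)⁆ + ⁅(u : L), ⁅(c : L), (x : L)⁆⁆ := leibniz_lie _ _ _
  have hsplit : (⟨⁅(c : L), ⁅(u : L), (x : L)⁆⁆, h⟩ : A.grading (i + (p + q)))
      = ⟨_, ma'⟩ + ⟨_, mb'⟩ := Subtype.ext e
  rw [hsplit, map_add, s13_congr A β (show i + (p + q) = (i + p) + q by ring) _ ma' ma,
    s13_congr A β (show i + (p + q) = p + (i + q) by ring) _ mb' mb,
    h3 hcu ma, h4 hcx mb, h1 hcu, h2 hcx, hval]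
  simp only [add_lie, lie_add, lie_lie]
  abel

/-- To establish the derivation identity in bidegree `(i, m)` it suffices to check it on
a spanning set of the `m`-th graded piece. -/
theorem s13_extDer (A : AssocGradedLieAlgebra k g V W P L) (β : S13Fam A) {i m : ℤ}
    (S : Set L) (hspan : A.grading m = Submodule.span k S)
    (hgen : ∀ z ∈ S, ∀ (hz : z ∈ A.grading m) (a : ↥(A.grading i))
      (h : ⁅(a : L), z⁆ ∈ A.grading (i + m)),
      β (i + m) ⟨⁅(a : L), z⁆, h⟩ = ⁅β i a, z⁆ + ⁅(a : L), β m ⟨z, hz⟩⁆) :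
    S13Der A β i m := by
  have key : ∀ (a : ↥(A.grading i)) (z : L), z ∈ Submodule.span k S →
      ∀ (hz : z ∈ A.grading m) (h : ⁅(a : L), z⁆ ∈ A.grading (i + m)),
      β (i + m) ⟨⁅(a : L), z⁆, h⟩ = ⁅β i a, z⁆ + ⁅(a : L), β m ⟨z, hz⟩⁆ := by
    intro a z hz2
    refine Submodule.span_induction (p := fun z _ => ∀ (hz : z ∈ A.grading m)
      (h : ⁅(a : L), z⁆ ∈ A.grading (i + m)),
      β (i + m) ⟨⁅(a : L), z⁆, h⟩ = ⁅β i a, z⁆ + ⁅(a : L), β m ⟨z, hz⟩⁆)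
      ?_ ?_ ?_ ?_ hz2
    · intro z hzS hz h; exact hgen z hzS hz a h
    · intro hz0 h
      have e0 : (⟨⁅(a : L), (0 : L)⁆, h⟩ : A.grading (i + m)) = 0 := Subtype.ext (lie_zero _)
      have e0' : (⟨(0 : L), hz0⟩ : A.grading m) = 0 := rfl
      rw [e0, e0', map_zero, map_zero, lie_zero, lie_zero, add_zero]
    · intro z1 z2 hz1s hz2s ih1 ih2 hz h
      have m1 : z1 ∈ A.grading m := by rw [hspan]; exact hz1s
      have m2 : z2 ∈ A.grading m := by rw [hspan]; exact hz2s
      have b1 : ⁅(a : L), z1⁆ ∈ A.grading (i + m) := A.lie_mem _ _ _ a.2 _ m1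
      have b2 : ⁅(a : L), z2⁆ ∈ A.grading (i + m) := A.lie_mem _ _ _ a.2 _ m2
      have es : (⟨⁅(a : L), z1 + z2⁆, h⟩ : A.grading (i + m))
          = ⟨⁅(a : L), z1⁆, b1⟩ + ⟨⁅(a : L), z2⁆, b2⟩ := Subtype.ext (lie_add _ _ _)
      have es2 : (⟨z1 + z2, hz⟩ : A.grading m) = ⟨z1, m1⟩ + ⟨z2, m2⟩ := Subtype.ext rfl
      rw [es, es2, map_add, map_add, ih1 m1 b1, ih2 m2 b2, lie_add, lie_add]
      abel
    · intro t z hzs ih hz h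
      have m1 : z ∈ A.grading m := by rw [hspan]; exact hzs
      have b1 : ⁅(a : L), z⁆ ∈ A.grading (i + m) := A.lie_mem _ _ _ a.2 _ m1
      have es : (⟨⁅(a : L), t • z⁆, h⟩ : A.grading (i + m)) = t • ⟨⁅(a : L), z⁆, b1⟩ :=
        Subtype.ext (by simp [lie_smul])
      have es2 : (⟨t • z, hz⟩ : A.grading m) = t • ⟨z, m1⟩ := Subtype.ext rfl
      rw [es, es2, map_smul, map_smul, ih m1 b1, lie_smul, smul_add, lie_smul]
  intro a b h
  obtain ⟨z, hz⟩ := b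
  exact key a z (by rw [← hspan]; exact hz) hz h

/-- Right bracket as a linear map. -/
def s13rB (c : L) : L →ₗ[k] L where
  toFun z := ⁅z, c⁆
  map_add' a b := add_lie a b c
  map_smul' t a := smul_lie t a c

@[simp] theorem s13rB_apply (c z : L) : s13rB (k := k) c z = ⁅z, c⁆ := rfl

/-- The bracket map on a pair of graded pieces, as a map from the tensor product. -/
noncomputable def s13T (A : AssocGradedLieAlgebra k g V W P L) (p q : ℤ) :
    (↥(A.grading p) ⊗[k] ↥(A.grading q)) →ₗ[k] L :=
  TensorProduct.lift (LinearMap.mk₂ k (fun u x => ⁅(u : L), (x : L)⁆)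
    (fun u u' x => by simp [add_lie]) (fun t u x => by simp [smul_lie])
    (fun u x x' => by simp [lie_add]) (fun u t x => by simp [lie_smul]))

@[simp] theorem s13T_tmul (A : AssocGradedLieAlgebra k g V W P L) (p q : ℤ)
    (u : ↥(A.grading p)) (x : ↥(A.grading q)) :
    s13T A p q (u ⊗ₜ[k] x) = ⁅(u : L), (x : L)⁆ := rfl

/-- The candidate value map on a pair of graded pieces. -/
noncomputable def s13D (A : AssocGradedLieAlgebra k g V W P L) (β : S13Fam A) (p q : ℤ) :
    (↥(A.grading p) ⊗[k] ↥(A.grading q)) →ₗ[k] L :=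
  TensorProduct.lift (LinearMap.mk₂ k (fun u x => ⁅β p u, (x : L)⁆ + ⁅(u : L), β q x⁆)
    (fun u u' x => by simp only [map_add, add_lie, Submodule.coe_add]; abel)
    (fun t u x => by simp only [map_smul, SetLike.val_smul, smul_lie, smul_add])
    (fun u x x' => by simp only [map_add, lie_add, Submodule.coe_add, add_lie]; abel)
    (fun u t x => by simp only [map_smul, SetLike.val_smul, lie_smul, smul_add]))

@[simp] theorem s13D_tmul (A : AssocGradedLieAlgebra k g V W P L) (β : S13Fam A) (p q : ℤ)
    (u : ↥(A.grading p)) (x : ↥(A.grading q)) :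
    s13D A β p q (u ⊗ₜ[k] x) = ⁅β p u, (x : L)⁆ + ⁅(u : L), β q x⁆ := rfl

theorem s13T_range (A : AssocGradedLieAlgebra k g V W P L) (p q : ℤ) :
    LinearMap.range (s13T A p q)
      = Submodule.span k {z : L | ∃ x ∈ A.grading p, ∃ y ∈ A.grading q, z = ⁅x, y⁆} := by
  rw [LinearMap.range_eq_map, ← TensorProduct.span_tmul_eq_top, Submodule.map_span]
  congr 1
  ext z
  constructor
  · rintro ⟨t, ⟨u, x, rfl⟩, rfl⟩
    exact ⟨u, u.2, x, x.2, (s13T_tmul A p q u x).symm⟩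
  · rintro ⟨xv, hx, yv, hy, rfl⟩
    exact ⟨(⟨xv, hx⟩ : ↥(A.grading p)) ⊗ₜ[k] (⟨yv, hy⟩ : ↥(A.grading q)), ⟨_, _, rfl⟩, rfl⟩

theorem s13D_range (A : AssocGradedLieAlgebra k g V W P L) (β : S13Fam A) (p q : ℤ)
    (hm : ∀ (n : ℤ) (x : ↥(A.grading n)), β n x ∈ A.grading n) :
    LinearMap.range (s13D A β p q) ≤ A.grading (p + q) := by
  rw [LinearMap.range_eq_map, ← TensorProduct.span_tmul_eq_top, Submodule.map_span,
    Submodule.span_le]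
  rintro z ⟨t, ⟨u, x, rfl⟩, rfl⟩
  rw [SetLike.mem_coe, s13D_tmul]
  exact add_mem (A.lie_mem _ _ _ (hm p u) _ x.2) (A.lie_mem _ _ _ u.2 _ (hm q x))

theorem s13_factor {M : Type*} [AddCommGroup M] [Module k M] {p : Submodule k L}
    (T D : M →ₗ[k] L) (hrange : LinearMap.range T = p)
    (hker : ∀ t, T t = 0 → D t = 0) :
    ∃ γ : ↥p →ₗ[k] L, ∀ z : ↥p, ∃ t, T t = (z : L) ∧ γ z = D t := by
  have hle : LinearMap.ker T ≤ LinearMap.ker D := fun t ht => hker t ht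
  refine ⟨((LinearMap.ker T).liftQ D hle).comp
    ((T.quotKerEquivRange.symm.toLinearMap).comp
      (LinearEquiv.ofEq p (LinearMap.range T) hrange.symm).toLinearMap), ?_⟩
  intro z
  obtain ⟨t, ht⟩ := (LinearEquiv.ofEq p (LinearMap.range T) hrange.symm z).2
  refine ⟨t, by rw [ht]; rfl, ?_⟩
  simp only [LinearMap.comp_apply, LinearEquiv.coe_coe]
  have h2 : T.quotKerEquivRange.symm ((LinearEquiv.ofEq p (LinearMap.range T) hrange.symm) z)
      = Submodule.Quotient.mk t := by
    apply (LinearEquiv.symm_apply_eq _).mpr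
    apply Subtype.ext
    rw [LinearMap.quotKerEquivRange_apply_mk]
    exact ht.symm
  rw [h2, Submodule.liftQ_apply]

/-- Construction of the extension of the family to degree `N + 1`. -/
theorem s13_newplus (A : AssocGradedLieAlgebra k g V W P L)
    {α₀ : ↥(A.grading 0) →ₗ[k] ↥(A.grading 0)}
    {α₁ : ↥(A.grading 1) →ₗ[k] ↥(A.grading 1)}
    {αm : ↥(A.grading (-1)) →ₗ[k] ↥(A.grading (-1))}
    {β : S13Fam A} {N : ℕ} (hN : 1 ≤ N) (hC : S13Cond A α₀ α₁ αm β N) :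
    ∃ γ : ↥(A.grading ((N : ℤ) + 1)) →ₗ[k] L,
      (∀ z, γ z ∈ A.grading ((N : ℤ) + 1)) ∧
      ∀ (u : ↥(A.grading 1)) (x : ↥(A.grading (N : ℤ)))
        (h : ⁅(u : L), (x : L)⁆ ∈ A.grading ((N : ℤ) + 1)),
        γ ⟨⁅(u : L), (x : L)⁆, h⟩ = ⁅β 1 u, (x : L)⁆ + ⁅(u : L), β (N : ℤ) x⁆ := by
  have hN1 : (1 : ℤ) ≤ (N : ℤ) := by exact_mod_cast hN
  have hrangeT : LinearMap.range (s13T A 1 (N : ℤ)) = A.grading ((N : ℤ) + 1) := by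
    rw [s13T_range]
    exact (A.span_pos (N : ℤ) hN1).symm
  have hrangeD : LinearMap.range (s13D A β 1 (N : ℤ)) ≤ A.grading ((N : ℤ) + 1) := by
    have := s13D_range A β 1 (N : ℤ) hC.1
    rwa [show (1 : ℤ) + (N : ℤ) = (N : ℤ) + 1 by ring] at this
  have hker : ∀ t, s13T A 1 (N : ℤ) t = 0 → s13D A β 1 (N : ℤ) t = 0 := by
    intro t ht
    have hDmem : s13D A β 1 (N : ℤ) t ∈ A.grading ((N : ℤ) + 1) := hrangeD ⟨t, rfl⟩
    apply A.trans_pos ((N : ℤ) + 1) (by omega) _ hDmem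
    intro yv hy
    set y : ↥(A.grading (-1)) := ⟨yv, hy⟩
    have hmemT : ∀ s, ⁅s13T A 1 (N : ℤ) s, (y : L)⁆ ∈ A.grading (N : ℤ) := by
      intro s
      have h1 : s13T A 1 (N : ℤ) s ∈ A.grading ((N : ℤ) + 1) := by
        rw [← hrangeT]; exact ⟨s, rfl⟩
      have h2 := A.lie_mem _ _ _ h1 _ y.2
      rwa [show (N : ℤ) + 1 + -1 = (N : ℤ) by ring] at h2
    have heq : ∀ s, ⁅s13D A β 1 (N : ℤ) s, (y : L)⁆
        = β (N : ℤ) ⟨⁅s13T A 1 (N : ℤ) s, (y : L)⁆, hmemT s⟩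
          - ⁅s13T A 1 (N : ℤ) s, β (-1) y⁆ := by
      intro s
      induction s using TensorProduct.induction_on with
      | zero =>
        have e0 : (⟨⁅s13T A 1 (N : ℤ) 0, (y : L)⁆, hmemT 0⟩ : A.grading (N : ℤ)) = 0 :=
          Subtype.ext (show ⁅s13T A 1 (N : ℤ) 0, (y : L)⁆ = (0 : L) by
            rw [map_zero, zero_lie])
        rw [e0]
        simp only [map_zero, zero_lie, sub_zero]
      | tmul u x =>
        have h' : ⁅⁅(u : L), (x : L)⁆, (y : L)⁆ ∈ A.grading (N : ℤ) := by
          have := hmemT (u ⊗ₜ[k] x); rwa [s13T_tmul] at this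
        have e1 : (⟨⁅s13T A 1 (N : ℤ) (u ⊗ₜ[k] x), (y : L)⁆, hmemT _⟩ : A.grading (N : ℤ))
            = ⟨⁅⁅(u : L), (x : L)⁆, (y : L)⁆, h'⟩ :=
          Subtype.ext (show ⁅s13T A 1 (N : ℤ) (u ⊗ₜ[k] x), (y : L)⁆
            = ⁅⁅(u : L), (x : L)⁆, (y : L)⁆ by rw [s13T_tmul])
        rw [s13D_tmul, e1, s13T_tmul]
        exact s13_key A hN hC (by omega) (by omega) (by omega) u x y h'
      | add t1 t2 ih1 ih2 =>
        have e1 : (⟨⁅s13T A 1 (N : ℤ) (t1 + t2), (y : L)⁆, hmemT _⟩ : A.grading (N : ℤ))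
            = ⟨⁅s13T A 1 (N : ℤ) t1, (y : L)⁆, hmemT t1⟩
              + ⟨⁅s13T A 1 (N : ℤ) t2, (y : L)⁆, hmemT t2⟩ :=
          Subtype.ext (show ⁅s13T A 1 (N : ℤ) (t1 + t2), (y : L)⁆
            = ⁅s13T A 1 (N : ℤ) t1, (y : L)⁆ + ⁅s13T A 1 (N : ℤ) t2, (y : L)⁆ by
              rw [map_add, add_lie])
        rw [map_add, add_lie, ih1, ih2, e1, map_add, map_add, add_lie]
        abel
    have e0 : (⟨⁅s13T A 1 (N : ℤ) t, (y : L)⁆, hmemT t⟩ : A.grading (N : ℤ)) = 0 :=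
      Subtype.ext (show ⁅s13T A 1 (N : ℤ) t, (y : L)⁆ = (0 : L) by rw [ht, zero_lie])
    rw [heq t, e0, map_zero, ht, zero_lie, sub_zero]
  obtain ⟨γ, hγ⟩ := s13_factor (s13T A 1 (N : ℤ)) (s13D A β 1 (N : ℤ)) hrangeT hker
  refine ⟨γ, ?_, ?_⟩
  · intro z
    obtain ⟨t, _, hg⟩ := hγ z
    rw [hg]
    exact hrangeD ⟨t, rfl⟩
  · intro u x h
    obtain ⟨t, ht, hg⟩ := hγ ⟨⁅(u : L), (x : L)⁆, h⟩
    rw [hg]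
    have hd : s13D A β 1 (N : ℤ) t - s13D A β 1 (N : ℤ) (u ⊗ₜ[k] x) = 0 := by
      rw [← map_sub]
      apply hker
      rw [map_sub, ht, s13T_tmul, sub_self]
    have : s13D A β 1 (N : ℤ) t = s13D A β 1 (N : ℤ) (u ⊗ₜ[k] x) := by
      rw [← sub_eq_zero]; exact hd
    rw [this, s13D_tmul]

/-- Construction of the extension of the family to degree `-(N + 1)`. -/
theorem s13_newminus (A : AssocGradedLieAlgebra k g V W P L)
    {α₀ : ↥(A.grading 0) →ₗ[k] ↥(A.grading 0)}
    {α₁ : ↥(A.grading 1) →ₗ[k] ↥(A.grading 1)}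
    {αm : ↥(A.grading (-1)) →ₗ[k] ↥(A.grading (-1))}
    {β : S13Fam A} {N : ℕ} (hN : 1 ≤ N) (hC : S13Cond A α₀ α₁ αm β N) :
    ∃ γ : ↥(A.grading (-(N : ℤ) - 1)) →ₗ[k] L,
      (∀ z, γ z ∈ A.grading (-(N : ℤ) - 1)) ∧
      ∀ (u : ↥(A.grading (-1))) (x : ↥(A.grading (-(N : ℤ))))
        (h : ⁅(u : L), (x : L)⁆ ∈ A.grading (-(N : ℤ) - 1)),
        γ ⟨⁅(u : L), (x : L)⁆, h⟩ = ⁅β (-1) u, (x : L)⁆ + ⁅(u : L), β (-(N : ℤ)) x⁆ := by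
  have hN1 : (1 : ℤ) ≤ (N : ℤ) := by exact_mod_cast hN
  have hrangeT : LinearMap.range (s13T A (-1) (-(N : ℤ))) = A.grading (-(N : ℤ) - 1) := by
    rw [s13T_range]
    exact (A.span_neg (N : ℤ) hN1).symm
  have hrangeD : LinearMap.range (s13D A β (-1) (-(N : ℤ))) ≤ A.grading (-(N : ℤ) - 1) := by
    have := s13D_range A β (-1) (-(N : ℤ)) hC.1
    rwa [show (-1 : ℤ) + -(N : ℤ) = -(N : ℤ) - 1 by ring] at this
  have hker : ∀ t, s13T A (-1) (-(N : ℤ)) t = 0 → s13D A β (-1) (-(N : ℤ)) t = 0 := by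
    intro t ht
    have hDmem : s13D A β (-1) (-(N : ℤ)) t ∈ A.grading (-(N : ℤ) - 1) := hrangeD ⟨t, rfl⟩
    have hDmem' : s13D A β (-1) (-(N : ℤ)) t ∈ A.grading (-((N : ℤ) + 1)) := by
      rwa [show -((N : ℤ) + 1) = -(N : ℤ) - 1 by ring]
    apply A.trans_neg ((N : ℤ) + 1) (by omega) _ hDmem'
    intro yv hy
    set y : ↥(A.grading 1) := ⟨yv, hy⟩
    have hmemT : ∀ s, ⁅s13T A (-1) (-(N : ℤ)) s, (y : L)⁆ ∈ A.grading (-(N : ℤ)) := by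
      intro s
      have h1 : s13T A (-1) (-(N : ℤ)) s ∈ A.grading (-(N : ℤ) - 1) := by
        rw [← hrangeT]; exact ⟨s, rfl⟩
      have h2 := A.lie_mem _ _ _ h1 _ y.2
      rwa [show -(N : ℤ) - 1 + 1 = -(N : ℤ) by ring] at h2
    have heq : ∀ s, ⁅s13D A β (-1) (-(N : ℤ)) s, (y : L)⁆
        = β (-(N : ℤ)) ⟨⁅s13T A (-1) (-(N : ℤ)) s, (y : L)⁆, hmemT s⟩
          - ⁅s13T A (-1) (-(N : ℤ)) s, β 1 y⁆ := by
      intro s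
      induction s using TensorProduct.induction_on with
      | zero =>
        have e0 : (⟨⁅s13T A (-1) (-(N : ℤ)) 0, (y : L)⁆, hmemT 0⟩ : A.grading (-(N : ℤ))) = 0 :=
          Subtype.ext (show ⁅s13T A (-1) (-(N : ℤ)) 0, (y : L)⁆ = (0 : L) by
            rw [map_zero, zero_lie])
        rw [e0]
        simp only [map_zero, zero_lie, sub_zero]
      | tmul u x =>
        have h' : ⁅⁅(u : L), (x : L)⁆, (y : L)⁆ ∈ A.grading (-(N : ℤ)) := by
          have := hmemT (u ⊗ₜ[k] x); rwa [s13T_tmul] at this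
        have e1 : (⟨⁅s13T A (-1) (-(N : ℤ)) (u ⊗ₜ[k] x), (y : L)⁆, hmemT _⟩
              : A.grading (-(N : ℤ)))
            = ⟨⁅⁅(u : L), (x : L)⁆, (y : L)⁆, h'⟩ :=
          Subtype.ext (show ⁅s13T A (-1) (-(N : ℤ)) (u ⊗ₜ[k] x), (y : L)⁆
            = ⁅⁅(u : L), (x : L)⁆, (y : L)⁆ by rw [s13T_tmul])
        rw [s13D_tmul, e1, s13T_tmul]
        have hy' : (y : L) ∈ A.grading (-(-1 : ℤ)) := by
          have := y.2; rwa [show (-(-1 : ℤ)) = 1 by norm_num]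
        have key := s13_key A hN hC (p := (-1 : ℤ)) (q := -(N : ℤ)) (by omega) (by omega)
          (by omega) u x ⟨(y : L), hy'⟩ h'
        rw [key, s13_congr A β (show (-(-1 : ℤ)) = 1 by norm_num) (y : L) hy' y.2]
      | add t1 t2 ih1 ih2 =>
        have e1 : (⟨⁅s13T A (-1) (-(N : ℤ)) (t1 + t2), (y : L)⁆, hmemT _⟩
              : A.grading (-(N : ℤ)))
            = ⟨⁅s13T A (-1) (-(N : ℤ)) t1, (y : L)⁆, hmemT t1⟩
              + ⟨⁅s13T A (-1) (-(N : ℤ)) t2, (y : L)⁆, hmemT t2⟩ :=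
          Subtype.ext (show ⁅s13T A (-1) (-(N : ℤ)) (t1 + t2), (y : L)⁆
            = ⁅s13T A (-1) (-(N : ℤ)) t1, (y : L)⁆ + ⁅s13T A (-1) (-(N : ℤ)) t2, (y : L)⁆ by
              rw [map_add, add_lie])
        rw [map_add, add_lie, ih1, ih2, e1, map_add, map_add, add_lie]
        abel
    have e0 : (⟨⁅s13T A (-1) (-(N : ℤ)) t, (y : L)⁆, hmemT t⟩ : A.grading (-(N : ℤ))) = 0 :=
      Subtype.ext (show ⁅s13T A (-1) (-(N : ℤ)) t, (y : L)⁆ = (0 : L) by rw [ht, zero_lie])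
    rw [heq t, e0, map_zero, ht, zero_lie, sub_zero]
  obtain ⟨γ, hγ⟩ := s13_factor (s13T A (-1) (-(N : ℤ))) (s13D A β (-1) (-(N : ℤ))) hrangeT hker
  refine ⟨γ, ?_, ?_⟩
  · intro z
    obtain ⟨t, _, hg⟩ := hγ z
    rw [hg]
    exact hrangeD ⟨t, rfl⟩
  · intro u x h
    obtain ⟨t, ht, hg⟩ := hγ ⟨⁅(u : L), (x : L)⁆, h⟩
    rw [hg]
    have hd : s13D A β (-1) (-(N : ℤ)) t = s13D A β (-1) (-(N : ℤ)) (u ⊗ₜ[k] x) := by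
      rw [← sub_eq_zero, ← map_sub]
      apply hker
      rw [map_sub, ht, s13T_tmul, sub_self]
    rw [hd, s13D_tmul]

theorem s13_reindex (A : AssocGradedLieAlgebra k g V W P L) (β : S13Fam A)
    {i i' j j' : ℤ} (ei : i = i') (ej : j = j') (H : S13Der A β i' j') : S13Der A β i j := by
  subst ei; subst ej; exact H

theorem s13_closeDer (A : AssocGradedLieAlgebra k g V W P L) (β' : S13Fam A) {i p q : ℤ}
    (d1 : S13Der A β' i p) (d2 : S13Der A β' i q)
    (d3 : S13Der A β' (i + p) q) (d4 : S13Der A β' p (i + q))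
    (dval : S13Der A β' p q) :
    ∀ (c : ↥(A.grading i)) (u : ↥(A.grading p)) (x : ↥(A.grading q))
      (hz : ⁅(u : L), (x : L)⁆ ∈ A.grading (p + q))
      (h : ⁅(c : L), ⁅(u : L), (x : L)⁆⁆ ∈ A.grading (i + (p + q))),
      β' (i + (p + q)) ⟨⁅(c : L), ⁅(u : L), (x : L)⁆⁆, h⟩
        = ⁅β' i c, ⁅(u : L), (x : L)⁆⁆ + ⁅(c : L), β' (p + q) ⟨⁅(u : L), (x : L)⁆, hz⟩⁆ := by
  intro c u x hz h
  apply s13_close A β' c u x (fun hh => d1 c u hh) (fun hh => d2 c x hh)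
    ?_ ?_ hz (dval u x hz) h
  · intro hcu hh; exact d3 ⟨⁅(c : L), (u : L)⁆, hcu⟩ x hh
  · intro hcx hh; exact d4 u ⟨⁅(c : L), (x : L)⁆, hcx⟩ hh

theorem s13_step (A : AssocGradedLieAlgebra k g V W P L)
    {α₀ : ↥(A.grading 0) →ₗ[k] ↥(A.grading 0)}
    {α₁ : ↥(A.grading 1) →ₗ[k] ↥(A.grading 1)}
    {αm : ↥(A.grading (-1)) →ₗ[k] ↥(A.grading (-1))}
    {β : S13Fam A} {N : ℕ} (hN : 1 ≤ N) (hC : S13Cond A α₀ α₁ αm β N) :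
    ∃ β', S13Cond A α₀ α₁ αm β' (N + 1) := by
  classical
  have hN1 : (1 : ℤ) ≤ (N : ℤ) := by exact_mod_cast hN
  obtain ⟨γp, hγpmem, hγpval⟩ := s13_newplus A hN hC
  obtain ⟨γm, hγmmem, hγmval⟩ := s13_newminus A hN hC
  set β' : S13Fam A := fun n =>
    if h1 : n = (N : ℤ) + 1 then
      γp.comp (LinearEquiv.ofEq (A.grading n) (A.grading ((N : ℤ) + 1)) (by rw [h1])).toLinearMap
    else if h2 : n = -(N : ℤ) - 1 then
      γm.comp (LinearEquiv.ofEq (A.grading n) (A.grading (-(N : ℤ) - 1)) (by rw [h2])).toLinearMap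
    else β n with hβ'
  have hold : ∀ n : ℤ, n ≠ (N : ℤ) + 1 → n ≠ -(N : ℤ) - 1 → β' n = β n := by
    intro n e1 e2
    rw [hβ']
    simp only [dif_neg e1, dif_neg e2]
  have hvalp : ∀ (z : L) (hz : z ∈ A.grading ((N : ℤ) + 1)),
      β' ((N : ℤ) + 1) ⟨z, hz⟩ = γp ⟨z, hz⟩ := by
    intro z hz
    rw [hβ']
    simp only [dite_true]
    rw [LinearMap.comp_apply]
    exact congrArg γp (Subtype.ext rfl)
  have hvalm : ∀ (z : L) (hz : z ∈ A.grading (-(N : ℤ) - 1)),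
      β' (-(N : ℤ) - 1) ⟨z, hz⟩ = γm ⟨z, hz⟩ := by
    intro z hz
    rw [hβ']
    have hne : -(N : ℤ) - 1 ≠ (N : ℤ) + 1 := by omega
    simp only [dif_neg hne, dite_true]
    rw [LinearMap.comp_apply]
    exact congrArg γm (Subtype.ext rfl)
  have holdN : ∀ n : ℤ, n.natAbs ≤ N → β' n = β n := fun n hn =>
    hold n (by omega) (by omega)
  have derOld : ∀ i j : ℤ, (i.natAbs ≤ 1 ∨ j.natAbs ≤ 1) → i.natAbs ≤ N → j.natAbs ≤ N →
      (i + j).natAbs ≤ N → S13Der A β' i j := by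
    intro i j hmin h1 h2 h3 a b h
    rw [holdN i h1, holdN j h2, holdN (i + j) h3]
    exact hC.2.2.2.2 i j hmin h1 h2 h3 a b h
  have dP : S13Der A β' 1 (N : ℤ) := by
    intro u x h
    have e : (1 : ℤ) + (N : ℤ) = (N : ℤ) + 1 := by ring
    have h' : ⁅(u : L), (x : L)⁆ ∈ A.grading ((N : ℤ) + 1) := by rwa [e] at h
    rw [s13_congr A β' e _ h h', hvalp _ h', hγpval u x h',
      holdN 1 (by omega), holdN (N : ℤ) (by omega)]
  have dM : S13Der A β' (-1) (-(N : ℤ)) := by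
    intro u x h
    have e : (-1 : ℤ) + -(N : ℤ) = -(N : ℤ) - 1 := by ring
    have h' : ⁅(u : L), (x : L)⁆ ∈ A.grading (-(N : ℤ) - 1) := by rwa [e] at h
    rw [s13_congr A β' e _ h h', hvalm _ h', hγmval u x h',
      holdN (-1) (by omega), holdN (-(N : ℤ)) (by omega)]
  have d0p : S13Der A β' 0 ((N : ℤ) + 1) := by
    apply s13_extDer A β' _ (A.span_pos (N : ℤ) hN1)
    rintro z ⟨uv, hu, xv, hx, rfl⟩ hz a h
    have hm : ⁅uv, xv⁆ ∈ A.grading (1 + (N : ℤ)) := A.lie_mem _ _ _ hu _ hx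
    have h2 : ⁅(a : L), ⁅uv, xv⁆⁆ ∈ A.grading ((0 : ℤ) + (1 + (N : ℤ))) := by
      rwa [show (0 : ℤ) + (1 + (N : ℤ)) = 0 + ((N : ℤ) + 1) by ring]
    have key := s13_closeDer A β' (i := 0) (p := 1) (q := (N : ℤ))
      (derOld 0 1 (Or.inl (by omega)) (by omega) (by omega) (by omega))
      (derOld 0 (N : ℤ) (Or.inl (by omega)) (by omega) (by omega) (by omega))
      (s13_reindex A β' (by ring) rfl dP)
      (s13_reindex A β' rfl (by ring) dP)
      dP a ⟨uv, hu⟩ ⟨xv, hx⟩ hm h2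
    rw [s13_congr A β' (show (0 : ℤ) + ((N : ℤ) + 1) = 0 + (1 + (N : ℤ)) by ring) _ h h2, key,
      s13_congr A β' (show (1 : ℤ) + (N : ℤ) = (N : ℤ) + 1 by ring) _ hm hz]
  have dmp : S13Der A β' (-1) ((N : ℤ) + 1) := by
    apply s13_extDer A β' _ (A.span_pos (N : ℤ) hN1)
    rintro z ⟨uv, hu, xv, hx, rfl⟩ hz a h
    have hm : ⁅uv, xv⁆ ∈ A.grading (1 + (N : ℤ)) := A.lie_mem _ _ _ hu _ hx
    have h2 : ⁅(a : L), ⁅uv, xv⁆⁆ ∈ A.grading ((-1 : ℤ) + (1 + (N : ℤ))) := by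
      rwa [show (-1 : ℤ) + (1 + (N : ℤ)) = -1 + ((N : ℤ) + 1) by ring]
    have key := s13_closeDer A β' (i := -1) (p := 1) (q := (N : ℤ))
      (derOld (-1) 1 (Or.inl (by omega)) (by omega) (by omega) (by omega))
      (derOld (-1) (N : ℤ) (Or.inl (by omega)) (by omega) (by omega) (by omega))
      (s13_reindex A β' (by ring) rfl
        (derOld 0 (N : ℤ) (Or.inl (by omega)) (by omega) (by omega) (by omega)))
      (derOld 1 ((-1 : ℤ) + (N : ℤ)) (Or.inl (by omega)) (by omega) (by omega) (by omega))
      dP a ⟨uv, hu⟩ ⟨xv, hx⟩ hm h2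
    rw [s13_congr A β' (show (-1 : ℤ) + ((N : ℤ) + 1) = -1 + (1 + (N : ℤ)) by ring) _ h h2, key,
      s13_congr A β' (show (1 : ℤ) + (N : ℤ) = (N : ℤ) + 1 by ring) _ hm hz]
  have d0m : S13Der A β' 0 (-(N : ℤ) - 1) := by
    apply s13_extDer A β' _ (A.span_neg (N : ℤ) hN1)
    rintro z ⟨uv, hu, xv, hx, rfl⟩ hz a h
    have hm : ⁅uv, xv⁆ ∈ A.grading ((-1 : ℤ) + -(N : ℤ)) := A.lie_mem _ _ _ hu _ hx
    have h2 : ⁅(a : L), ⁅uv, xv⁆⁆ ∈ A.grading ((0 : ℤ) + ((-1 : ℤ) + -(N : ℤ))) := by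
      rwa [show (0 : ℤ) + ((-1 : ℤ) + -(N : ℤ)) = 0 + (-(N : ℤ) - 1) by ring]
    have key := s13_closeDer A β' (i := 0) (p := -1) (q := -(N : ℤ))
      (derOld 0 (-1) (Or.inl (by omega)) (by omega) (by omega) (by omega))
      (derOld 0 (-(N : ℤ)) (Or.inl (by omega)) (by omega) (by omega) (by omega))
      (s13_reindex A β' (by ring) rfl dM)
      (s13_reindex A β' rfl (by ring) dM)
      dM a ⟨uv, hu⟩ ⟨xv, hx⟩ hm h2
    rw [s13_congr A β' (show (0 : ℤ) + (-(N : ℤ) - 1) = 0 + ((-1 : ℤ) + -(N : ℤ)) by ring)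
        _ h h2, key,
      s13_congr A β' (show (-1 : ℤ) + -(N : ℤ) = -(N : ℤ) - 1 by ring) _ hm hz]
  have d1m : S13Der A β' 1 (-(N : ℤ) - 1) := by
    apply s13_extDer A β' _ (A.span_neg (N : ℤ) hN1)
    rintro z ⟨uv, hu, xv, hx, rfl⟩ hz a h
    have hm : ⁅uv, xv⁆ ∈ A.grading ((-1 : ℤ) + -(N : ℤ)) := A.lie_mem _ _ _ hu _ hx
    have h2 : ⁅(a : L), ⁅uv, xv⁆⁆ ∈ A.grading ((1 : ℤ) + ((-1 : ℤ) + -(N : ℤ))) := by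
      rwa [show (1 : ℤ) + ((-1 : ℤ) + -(N : ℤ)) = 1 + (-(N : ℤ) - 1) by ring]
    have key := s13_closeDer A β' (i := 1) (p := -1) (q := -(N : ℤ))
      (derOld 1 (-1) (Or.inl (by omega)) (by omega) (by omega) (by omega))
      (derOld 1 (-(N : ℤ)) (Or.inl (by omega)) (by omega) (by omega) (by omega))
      (s13_reindex A β' (by ring) rfl
        (derOld 0 (-(N : ℤ)) (Or.inl (by omega)) (by omega) (by omega) (by omega)))
      (derOld (-1) ((1 : ℤ) + -(N : ℤ)) (Or.inl (by omega)) (by omega) (by omega) (by omega))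
      dM a ⟨uv, hu⟩ ⟨xv, hx⟩ hm h2
    rw [s13_congr A β' (show (1 : ℤ) + (-(N : ℤ) - 1) = 1 + ((-1 : ℤ) + -(N : ℤ)) by ring)
        _ h h2, key,
      s13_congr A β' (show (-1 : ℤ) + -(N : ℤ) = -(N : ℤ) - 1 by ring) _ hm hz]
  refine ⟨β', ?_, ?_, ?_, ?_, ?_⟩
  · -- membership
    intro n x
    by_cases e1 : n = (N : ℤ) + 1
    · subst e1
      obtain ⟨z, hz⟩ := x
      rw [hvalp z hz]
      exact hγpmem _
    by_cases e2 : n = -(N : ℤ) - 1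
    · subst e2
      obtain ⟨z, hz⟩ := x
      rw [hvalm z hz]
      exact hγmmem _
    · rw [hold n e1 e2]
      exact hC.1 n x
  · intro x; rw [hold 0 (by omega) (by omega)]; exact hC.2.1 x
  · intro x; rw [hold 1 (by omega) (by omega)]; exact hC.2.2.1 x
  · intro x; rw [hold (-1) (by omega) (by omega)]; exact hC.2.2.2.1 x
  · -- derivation identities
    intro i j hmin h1 h2 h3
    by_cases hall : i.natAbs ≤ N ∧ j.natAbs ≤ N ∧ (i + j).natAbs ≤ N
    · exact derOld i j hmin hall.1 hall.2.1 hall.2.2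
    · rcases hmin with hi | hj
      · have hiv : i = -1 ∨ i = 0 ∨ i = 1 := by omega
        rcases hiv with rfl | rfl | rfl
        · have hjv : j = (N : ℤ) + 1 ∨ j = -(N : ℤ) := by omega
          rcases hjv with rfl | rfl
          · exact dmp
          · exact dM
        · have hjv : j = (N : ℤ) + 1 ∨ j = -(N : ℤ) - 1 := by omega
          rcases hjv with rfl | rfl
          · exact d0p
          · exact d0m
        · have hjv : j = (N : ℤ) ∨ j = -(N : ℤ) - 1 := by omega
          rcases hjv with rfl | rfl
          · exact dP
          · exact d1m
      · have hjv : j = -1 ∨ j = 0 ∨ j = 1 := by omega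
        rcases hjv with rfl | rfl | rfl
        · have hiv : i = (N : ℤ) + 1 ∨ i = -(N : ℤ) := by omega
          rcases hiv with rfl | rfl
          · exact s13_flip A β' dmp
          · exact s13_flip A β' dM
        · have hiv : i = (N : ℤ) + 1 ∨ i = -(N : ℤ) - 1 := by omega
          rcases hiv with rfl | rfl
          · exact s13_flip A β' d0p
          · exact s13_flip A β' d0m
        · have hiv : i = (N : ℤ) ∨ i = -(N : ℤ) - 1 := by omega
          rcases hiv with rfl | rfl
          · exact s13_flip A β' dP
          · exact s13_flip A β' d1m

theorem s13_base (A : AssocGradedLieAlgebra k g V W P L)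
    (α₀ : ↥(A.grading 0) →ₗ[k] ↥(A.grading 0))
    (α₁ : ↥(A.grading 1) →ₗ[k] ↥(A.grading 1))
    (αm : ↥(A.grading (-1)) →ₗ[k] ↥(A.grading (-1)))
    (h00 : ∀ (a b : A.grading 0) (h : ⁅(a : L), (b : L)⁆ ∈ A.grading 0),
      (α₀ ⟨⁅(a : L), (b : L)⁆, h⟩ : L) = ⁅(α₀ a : L), (b : L)⁆ + ⁅(a : L), (α₀ b : L)⁆)
    (h01 : ∀ (a : A.grading 0) (b : A.grading 1) (h : ⁅(a : L), (b : L)⁆ ∈ A.grading 1),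
      (α₁ ⟨⁅(a : L), (b : L)⁆, h⟩ : L) = ⁅(α₀ a : L), (b : L)⁆ + ⁅(a : L), (α₁ b : L)⁆)
    (h10 : ∀ (a : A.grading 1) (b : A.grading 0) (h : ⁅(a : L), (b : L)⁆ ∈ A.grading 1),
      (α₁ ⟨⁅(a : L), (b : L)⁆, h⟩ : L) = ⁅(α₁ a : L), (b : L)⁆ + ⁅(a : L), (α₀ b : L)⁆)
    (h0m : ∀ (a : A.grading 0) (b : A.grading (-1)) (h : ⁅(a : L), (b : L)⁆ ∈ A.grading (-1)),
      (αm ⟨⁅(a : L), (b : L)⁆, h⟩ : L) = ⁅(α₀ a : L), (b : L)⁆ + ⁅(a : L), (αm b : L)⁆)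
    (hm0 : ∀ (a : A.grading (-1)) (b : A.grading 0) (h : ⁅(a : L), (b : L)⁆ ∈ A.grading (-1)),
      (αm ⟨⁅(a : L), (b : L)⁆, h⟩ : L) = ⁅(αm a : L), (b : L)⁆ + ⁅(a : L), (α₀ b : L)⁆)
    (h1m : ∀ (a : A.grading 1) (b : A.grading (-1)) (h : ⁅(a : L), (b : L)⁆ ∈ A.grading 0),
      (α₀ ⟨⁅(a : L), (b : L)⁆, h⟩ : L) = ⁅(α₁ a : L), (b : L)⁆ + ⁅(a : L), (αm b : L)⁆)
    (hm1 : ∀ (a : A.grading (-1)) (b : A.grading 1) (h : ⁅(a : L), (b : L)⁆ ∈ A.grading 0),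
      (α₀ ⟨⁅(a : L), (b : L)⁆, h⟩ : L) = ⁅(αm a : L), (b : L)⁆ + ⁅(a : L), (α₁ b : L)⁆) :
    ∃ β, S13Cond A α₀ α₁ αm β 1 := by
  classical
  set β₀ : S13Fam A := fun n =>
    if h0 : n = 0 then
      ((A.grading 0).subtype.comp α₀).comp
        (LinearEquiv.ofEq (A.grading n) (A.grading 0) (by rw [h0])).toLinearMap
    else if hp : n = 1 then
      ((A.grading 1).subtype.comp α₁).comp
        (LinearEquiv.ofEq (A.grading n) (A.grading 1) (by rw [hp])).toLinearMap
    else if hm : n = -1 then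
      ((A.grading (-1)).subtype.comp αm).comp
        (LinearEquiv.ofEq (A.grading n) (A.grading (-1)) (by rw [hm])).toLinearMap
    else 0 with hβ
  have hv0 : ∀ x, β₀ 0 x = ↑(α₀ x) := by
    intro x
    rw [hβ]
    simp only [dite_true]
    rw [LinearMap.comp_apply, LinearMap.comp_apply]
    exact congrArg (fun w => (α₀ w : L)) (Subtype.ext rfl)
  have hv1 : ∀ x, β₀ 1 x = ↑(α₁ x) := by
    intro x
    rw [hβ]
    have e0 : (1 : ℤ) ≠ 0 := by omega
    simp only [dif_neg e0, dite_true]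
    rw [LinearMap.comp_apply, LinearMap.comp_apply]
    exact congrArg (fun w => (α₁ w : L)) (Subtype.ext rfl)
  have hvm : ∀ x, β₀ (-1) x = ↑(αm x) := by
    intro x
    rw [hβ]
    have e0 : (-1 : ℤ) ≠ 0 := by omega
    have e1 : (-1 : ℤ) ≠ 1 := by omega
    simp only [dif_neg e0, dif_neg e1, dite_true]
    rw [LinearMap.comp_apply, LinearMap.comp_apply]
    exact congrArg (fun w => (αm w : L)) (Subtype.ext rfl)
  have hvz : ∀ n : ℤ, n ≠ 0 → n ≠ 1 → n ≠ -1 → β₀ n = 0 := by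
    intro n e0 e1 e2
    rw [hβ]
    simp only [dif_neg e0, dif_neg e1, dif_neg e2]
  refine ⟨β₀, ?_, hv0, hv1, hvm, ?_⟩
  · intro n x
    by_cases e0 : n = 0
    · subst e0; rw [hv0 x]; exact (α₀ x).2
    by_cases e1 : n = 1
    · subst e1; rw [hv1 x]; exact (α₁ x).2
    by_cases e2 : n = -1
    · subst e2; rw [hvm x]; exact (αm x).2
    · rw [hvz n e0 e1 e2]; exact zero_mem _
  · intro i j hmin hi hj hij
    have hcases : (i = 0 ∧ j = 0) ∨ (i = 0 ∧ j = 1) ∨ (i = 1 ∧ j = 0) ∨ (i = 0 ∧ j = -1)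
        ∨ (i = -1 ∧ j = 0) ∨ (i = 1 ∧ j = -1) ∨ (i = -1 ∧ j = 1) := by omega
    rcases hcases with ⟨rfl, rfl⟩ | ⟨rfl, rfl⟩ | ⟨rfl, rfl⟩ | ⟨rfl, rfl⟩ | ⟨rfl, rfl⟩
      | ⟨rfl, rfl⟩ | ⟨rfl, rfl⟩
    · intro a b h
      have e : (0 : ℤ) + 0 = 0 := by norm_num
      have h' : ⁅(a : L), (b : L)⁆ ∈ A.grading 0 := by rwa [e] at h
      rw [s13_congr A β₀ e _ h h', hv0, h00 a b h', hv0 a, hv0 b]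
    · intro a b h
      have e : (0 : ℤ) + 1 = 1 := by norm_num
      have h' : ⁅(a : L), (b : L)⁆ ∈ A.grading 1 := by rwa [e] at h
      rw [s13_congr A β₀ e _ h h', hv1, h01 a b h', hv0 a, hv1 b]
    · intro a b h
      have e : (1 : ℤ) + 0 = 1 := by norm_num
      have h' : ⁅(a : L), (b : L)⁆ ∈ A.grading 1 := by rwa [e] at h
      rw [s13_congr A β₀ e _ h h', hv1, h10 a b h', hv1 a, hv0 b]
    · intro a b h
      have e : (0 : ℤ) + -1 = -1 := by norm_num
      have h' : ⁅(a : L), (b : L)⁆ ∈ A.grading (-1) := by rwa [e] at h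
      rw [s13_congr A β₀ e _ h h', hvm, h0m a b h', hv0 a, hvm b]
    · intro a b h
      have e : (-1 : ℤ) + 0 = -1 := by norm_num
      have h' : ⁅(a : L), (b : L)⁆ ∈ A.grading (-1) := by rwa [e] at h
      rw [s13_congr A β₀ e _ h h', hvm, hm0 a b h', hvm a, hv0 b]
    · intro a b h
      have e : (1 : ℤ) + -1 = 0 := by norm_num
      have h' : ⁅(a : L), (b : L)⁆ ∈ A.grading 0 := by rwa [e] at h
      rw [s13_congr A β₀ e _ h h', hv0, h1m a b h', hv1 a, hvm b]
    · intro a b h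
      have e : (-1 : ℤ) + 1 = 0 := by norm_num
      have h' : ⁅(a : L), (b : L)⁆ ∈ A.grading 0 := by rwa [e] at h
      rw [s13_congr A β₀ e _ h h', hv0, hm1 a b h', hvm a, hv1 b]

theorem s13_uniq (A : AssocGradedLieAlgebra k g V W P L)
    {α₀ : ↥(A.grading 0) →ₗ[k] ↥(A.grading 0)}
    {α₁ : ↥(A.grading 1) →ₗ[k] ↥(A.grading 1)}
    {αm : ↥(A.grading (-1)) →ₗ[k] ↥(A.grading (-1))}
    {β β' : S13Fam A} {N N' : ℕ}
    (hC : S13Cond A α₀ α₁ αm β N) (hC' : S13Cond A α₀ α₁ αm β' N') :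
    ∀ n : ℤ, n.natAbs ≤ N → n.natAbs ≤ N' → β n = β' n := by
  suffices H : ∀ m : ℕ, ∀ n : ℤ, n.natAbs = m → n.natAbs ≤ N → n.natAbs ≤ N' → β n = β' n by
    intro n h1 h2; exact H n.natAbs n rfl h1 h2
  intro m
  induction m using Nat.strong_induction_on with
  | _ m ih =>
    intro n hm h1 h2
    by_cases hm0 : m = 0
    · have : n = 0 := by omega
      subst this
      ext x
      rw [hC.2.1 x, hC'.2.1 x]
    by_cases hm1 : m = 1
    · have : n = 1 ∨ n = -1 := by omega
      rcases this with rfl | rfl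
      · ext x; rw [hC.2.2.1 x, hC'.2.2.1 x]
      · ext x; rw [hC.2.2.2.1 x, hC'.2.2.2.1 x]
    · have hm2 : 2 ≤ m := by omega
      ext x
      rcases lt_or_gt_of_ne (show n ≠ 0 by omega) with hneg | hpos
      · have hnn : 2 ≤ -n := by omega
        have hmem : β n x - β' n x ∈ A.grading (-(-n)) := by
          rw [neg_neg]; exact sub_mem (hC.1 n x) (hC'.1 n x)
        have hz : β n x - β' n x = 0 := by
          apply A.trans_neg (-n) hnn _ hmem
          intro yv hy
          have hxy : ⁅(x : L), yv⁆ ∈ A.grading (n + 1) := A.lie_mem _ _ _ x.2 _ hy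
          have d1 := hC.2.2.2.2 n 1 (Or.inr (by omega)) (by omega) (by omega) (by omega)
            x ⟨yv, hy⟩ hxy
          have d2 := hC'.2.2.2.2 n 1 (Or.inr (by omega)) (by omega) (by omega) (by omega)
            x ⟨yv, hy⟩ hxy
          have e1 : β (n + 1) = β' (n + 1) := ih (n + 1).natAbs (by omega) (n + 1) rfl
            (by omega) (by omega)
          have e2 : β 1 = β' 1 := by
            ext z; rw [hC.2.2.1 z, hC'.2.2.1 z]
          have hEq : ⁅β n x, yv⁆ + ⁅(x : L), β 1 ⟨yv, hy⟩⁆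
              = ⁅β' n x, yv⁆ + ⁅(x : L), β' 1 ⟨yv, hy⟩⁆ := by
            rw [← d1, ← d2, e1]
          rw [e2] at hEq
          have h4 := add_right_cancel hEq
          rw [sub_lie, h4, sub_self]
        exact sub_eq_zero.mp hz
      · have hnn : 2 ≤ n := by omega
        have hmem : β n x - β' n x ∈ A.grading n := sub_mem (hC.1 n x) (hC'.1 n x)
        have hz : β n x - β' n x = 0 := by
          apply A.trans_pos n hnn _ hmem
          intro yv hy
          have hxy : ⁅(x : L), yv⁆ ∈ A.grading (n + -1) := A.lie_mem _ _ _ x.2 _ hy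
          have d1 := hC.2.2.2.2 n (-1) (Or.inr (by omega)) (by omega) (by omega) (by omega)
            x ⟨yv, hy⟩ hxy
          have d2 := hC'.2.2.2.2 n (-1) (Or.inr (by omega)) (by omega) (by omega) (by omega)
            x ⟨yv, hy⟩ hxy
          have e1 : β (n + -1) = β' (n + -1) := ih (n + -1).natAbs (by omega) (n + -1) rfl
            (by omega) (by omega)
          have e2 : β (-1) = β' (-1) := by
            ext z; rw [hC.2.2.2.1 z, hC'.2.2.2.1 z]
          have hEq : ⁅β n x, yv⁆ + ⁅(x : L), β (-1) ⟨yv, hy⟩⁆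
              = ⁅β' n x, yv⁆ + ⁅(x : L), β' (-1) ⟨yv, hy⟩⁆ := by
            rw [← d1, ← d2, e1]
          rw [e2] at hEq
          have h4 := add_right_cancel hEq
          rw [sub_lie, h4, sub_self]
        exact sub_eq_zero.mp hz

end S13Aux

/-- Let `L = ⊕ₙ Vₙ` be the graded Lie algebra associated with a standard
pentad, and let `αᵢ : Vᵢ → Vᵢ` for `i = 0, ±1` be linear maps satisfying
`α_{i+j}([aᵢ, bⱼ]) = [αᵢ(aᵢ), bⱼ] + [aᵢ, αⱼ(bⱼ)]` for all `-1 ≤ i, j, i+j ≤ 1`.  Then there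
exists a derivation `α` of `L` whose restriction to `Vᵢ` equals `αᵢ` for `i = 0, ±1`. -/
theorem statement13
    {k g V W L : Type*} [Field k] [LieRing g] [LieAlgebra k g]
    [AddCommGroup V] [Module k V] [AddCommGroup W] [Module k W]
    [LieRing L] [LieAlgebra k L]
    (P : PentadStruct k g V W)
    (A : AssocGradedLieAlgebra k g V W P L)
    (α₀ : ↥(A.grading 0) →ₗ[k] ↥(A.grading 0))
    (α₁ : ↥(A.grading 1) →ₗ[k] ↥(A.grading 1))
    (αm : ↥(A.grading (-1)) →ₗ[k] ↥(A.grading (-1)))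
    -- compatibility for `(i, j) = (0, 0)`:
    (h00 : ∀ (a b : A.grading 0) (h : ⁅(a : L), (b : L)⁆ ∈ A.grading 0),
      (α₀ ⟨⁅(a : L), (b : L)⁆, h⟩ : L) = ⁅(α₀ a : L), (b : L)⁆ + ⁅(a : L), (α₀ b : L)⁆)
    -- `(i, j) = (0, 1)`:
    (h01 : ∀ (a : A.grading 0) (b : A.grading 1) (h : ⁅(a : L), (b : L)⁆ ∈ A.grading 1),
      (α₁ ⟨⁅(a : L), (b : L)⁆, h⟩ : L) = ⁅(α₀ a : L), (b : L)⁆ + ⁅(a : L), (α₁ b : L)⁆)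
    -- `(i, j) = (1, 0)`:
    (h10 : ∀ (a : A.grading 1) (b : A.grading 0) (h : ⁅(a : L), (b : L)⁆ ∈ A.grading 1),
      (α₁ ⟨⁅(a : L), (b : L)⁆, h⟩ : L) = ⁅(α₁ a : L), (b : L)⁆ + ⁅(a : L), (α₀ b : L)⁆)
    -- `(i, j) = (0, -1)`:
    (h0m : ∀ (a : A.grading 0) (b : A.grading (-1)) (h : ⁅(a : L), (b : L)⁆ ∈ A.grading (-1)),
      (αm ⟨⁅(a : L), (b : L)⁆, h⟩ : L) = ⁅(α₀ a : L), (b : L)⁆ + ⁅(a : L), (αm b : L)⁆)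
    -- `(i, j) = (-1, 0)`:
    (hm0 : ∀ (a : A.grading (-1)) (b : A.grading 0) (h : ⁅(a : L), (b : L)⁆ ∈ A.grading (-1)),
      (αm ⟨⁅(a : L), (b : L)⁆, h⟩ : L) = ⁅(αm a : L), (b : L)⁆ + ⁅(a : L), (α₀ b : L)⁆)
    -- `(i, j) = (1, -1)`:
    (h1m : ∀ (a : A.grading 1) (b : A.grading (-1)) (h : ⁅(a : L), (b : L)⁆ ∈ A.grading 0),
      (α₀ ⟨⁅(a : L), (b : L)⁆, h⟩ : L) = ⁅(α₁ a : L), (b : L)⁆ + ⁅(a : L), (αm b : L)⁆)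
    -- `(i, j) = (-1, 1)`:
    (hm1 : ∀ (a : A.grading (-1)) (b : A.grading 1) (h : ⁅(a : L), (b : L)⁆ ∈ A.grading 0),
      (α₀ ⟨⁅(a : L), (b : L)⁆, h⟩ : L) = ⁅(αm a : L), (b : L)⁆ + ⁅(a : L), (α₁ b : L)⁆) :
    ∃ α : L →ₗ[k] L,
      (∀ x y : L, α ⁅x, y⁆ = ⁅α x, y⁆ + ⁅x, α y⁆)
      ∧ (∀ a : A.grading 0, α a = α₀ a)
      ∧ (∀ a : A.grading 1, α a = α₁ a)
      ∧ (∀ a : A.grading (-1), α a = αm a) := by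
  classical
  -- Stage 1: construct compatible families of maps on all graded pieces.
  have EXT : ∀ N : ℕ, ∃ β, S13Cond A α₀ α₁ αm β (N + 1) := by
    intro N
    induction N with
    | zero => exact s13_base A α₀ α₁ αm h00 h01 h10 h0m hm0 h1m hm1
    | succ n ih =>
      obtain ⟨β, hβ⟩ := ih
      exact s13_step A (by omega) hβ
  have hspec : ∀ m : ℕ, S13Cond A α₀ α₁ αm (EXT m).choose (m + 1) :=
    fun m => (EXT m).choose_spec
  have hagree : ∀ (M : ℕ) (n : ℤ), n.natAbs ≤ M + 1 →
      (EXT M).choose n = (EXT n.natAbs).choose n := fun M n hn =>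
    s13_uniq A (hspec M) (hspec n.natAbs) n hn (by omega)
  -- Stage 2: glue into one global family.
  have hBG : ∃ βg : S13Fam A,
      (∀ (n : ℤ) (x : ↥(A.grading n)), βg n x ∈ A.grading n) ∧
      (∀ x, βg 0 x = ↑(α₀ x)) ∧ (∀ x, βg 1 x = ↑(α₁ x)) ∧ (∀ x, βg (-1) x = ↑(αm x)) ∧
      (∀ i j : ℤ, (i.natAbs ≤ 1 ∨ j.natAbs ≤ 1) → S13Der A βg i j) := by
    refine ⟨fun n => (EXT n.natAbs).choose n, ?_, ?_, ?_, ?_, ?_⟩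
    · exact fun n x => (hspec n.natAbs).1 n x
    · exact fun x => (hspec (0 : ℤ).natAbs).2.1 x
    · exact fun x => (hspec (1 : ℤ).natAbs).2.2.1 x
    · exact fun x => (hspec (-1 : ℤ).natAbs).2.2.2.1 x
    · intro i j hmin a b h
      have hd := (hspec (i.natAbs + j.natAbs + (i + j).natAbs)).2.2.2.2 i j hmin
        (by omega) (by omega) (by omega) a b h
      rw [hagree _ i (by omega), hagree _ j (by omega), hagree _ (i + j) (by omega)] at hd
      exact hd
  obtain ⟨βg, hmemg, hg0, hg1, hgm, hDer⟩ := hBG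
  -- Stage 3: glue the family into a single linear map using the internal grading.
  have HA : ∃ α : L →ₗ[k] L, ∀ (n : ℤ) (x : ↥(A.grading n)), α ↑x = βg n x := by
    refine ⟨(DirectSum.toModule k ℤ L (fun n => βg n)).comp
      (LinearEquiv.ofBijective (DirectSum.coeLinearMap A.grading) A.isInternal).symm.toLinearMap,
      ?_⟩
    intro n x
    have h1 : (LinearEquiv.ofBijective (DirectSum.coeLinearMap A.grading) A.isInternal)
        (DirectSum.lof k ℤ (fun n => ↥(A.grading n)) n x) = ↑x := by
      show DirectSum.coeLinearMap A.grading (DirectSum.lof k ℤ (fun n => ↥(A.grading n)) n x)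
        = ↑x
      rw [DirectSum.lof_eq_of, DirectSum.coeLinearMap_of]
    have h2 : (LinearEquiv.ofBijective (DirectSum.coeLinearMap A.grading) A.isInternal).symm ↑x
        = DirectSum.lof k ℤ (fun n => ↥(A.grading n)) n x := by
      rw [← h1, LinearEquiv.symm_apply_apply]
    rw [LinearMap.comp_apply, LinearEquiv.coe_coe, h2, DirectSum.toModule_lof]
  obtain ⟨α, hα⟩ := HA
  -- Leibniz rule on graded pairs with one small degree.
  have hLeib : ∀ (i j : ℤ), (i.natAbs ≤ 1 ∨ j.natAbs ≤ 1) →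
      ∀ (a : ↥(A.grading i)) (b : ↥(A.grading j)),
      α ⁅(a : L), (b : L)⁆ = ⁅α (a : L), (b : L)⁆ + ⁅(a : L), α (b : L)⁆ := by
    intro i j hmin a b
    have h : ⁅(a : L), (b : L)⁆ ∈ A.grading (i + j) := A.lie_mem _ _ _ a.2 _ b.2
    have hd := hDer i j hmin a b h
    rw [hα i a, hα j b, ← hd]
    exact hα (i + j) ⟨⁅(a : L), (b : L)⁆, h⟩
  -- Leibniz rule for a small-degree element in the second slot, arbitrary first slot.
  have hgen : ∀ (j : ℤ), j.natAbs ≤ 1 → ∀ (y : ↥(A.grading j)) (x : L),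
      α ⁅x, (y : L)⁆ = ⁅α x, (y : L)⁆ + ⁅x, α (y : L)⁆ := by
    intro j hj y x
    have hx : x ∈ ⨆ n, A.grading n := by
      rw [A.isInternal.submodule_iSup_eq_top]; trivial
    refine Submodule.iSup_induction (motive := fun x => α ⁅x, (y : L)⁆
      = ⁅α x, (y : L)⁆ + ⁅x, α (y : L)⁆) A.grading hx ?_ ?_ ?_
    · intro i z hz
      exact hLeib i j (Or.inr hj) ⟨z, hz⟩ y
    · simp only [zero_lie, map_zero, add_zero]
    · intro x1 x2 ih1 ih2
      rw [add_lie, map_add, ih1, ih2, map_add, add_lie, add_lie]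
      abel
  -- The Leibniz property as a predicate on the second slot.
  have Padd : ∀ y1 y2 : L, (∀ x, α ⁅x, y1⁆ = ⁅α x, y1⁆ + ⁅x, α y1⁆) →
      (∀ x, α ⁅x, y2⁆ = ⁅α x, y2⁆ + ⁅x, α y2⁆) →
      ∀ x, α ⁅x, y1 + y2⁆ = ⁅α x, y1 + y2⁆ + ⁅x, α (y1 + y2)⁆ := by
    intro y1 y2 hy1 hy2 x
    rw [lie_add, map_add, hy1 x, hy2 x, map_add, lie_add, lie_add]
    abel
  have Psmul : ∀ (t : k) (y : L), (∀ x, α ⁅x, y⁆ = ⁅α x, y⁆ + ⁅x, α y⁆) →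
      ∀ x, α ⁅x, t • y⁆ = ⁅α x, t • y⁆ + ⁅x, α (t • y)⁆ := by
    intro t y hy x
    rw [lie_smul, map_smul, hy x, map_smul, lie_smul, lie_smul, smul_add]
  have Pzero : ∀ x : L, α ⁅x, (0 : L)⁆ = ⁅α x, (0 : L)⁆ + ⁅x, α (0 : L)⁆ := by
    intro x
    simp only [lie_zero, map_zero, add_zero]
  have Pbr : ∀ y1 y2 : L, (∀ x, α ⁅x, y1⁆ = ⁅α x, y1⁆ + ⁅x, α y1⁆) →
      (∀ x, α ⁅x, y2⁆ = ⁅α x, y2⁆ + ⁅x, α y2⁆) →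
      ∀ x, α ⁅x, ⁅y1, y2⁆⁆ = ⁅α x, ⁅y1, y2⁆⁆ + ⁅x, α ⁅y1, y2⁆⁆ := by
    intro y1 y2 hy1 hy2 x
    have swap : ∀ z : L, α ⁅y1, z⁆ = ⁅α y1, z⁆ + ⁅y1, α z⁆ := by
      intro z
      rw [← lie_skew y1 z, map_neg, hy1 z, ← lie_skew y1 (α z), ← lie_skew (α y1) z]
      abel
    rw [leibniz_lie x y1 y2, map_add, hy2 ⁅x, y1⁆, swap ⁅x, y2⁆, hy1 x, hy2 x, swap y2]
    simp only [lie_lie, add_lie, lie_add, lie_sub, sub_lie]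
    abel
  -- All graded pieces satisfy the predicate.
  have hsub : ∀ n : ℤ, ∀ z ∈ A.grading n, ∀ x : L,
      α ⁅x, z⁆ = ⁅α x, z⁆ + ⁅x, α z⁆ := by
    suffices H : ∀ m : ℕ, ∀ n : ℤ, n.natAbs = m → ∀ z ∈ A.grading n, ∀ x : L,
        α ⁅x, z⁆ = ⁅α x, z⁆ + ⁅x, α z⁆ by
      intro n; exact H n.natAbs n rfl
    intro m
    induction m using Nat.strong_induction_on with
    | _ m ih =>
      intro n hm z hz
      by_cases hsmall : n.natAbs ≤ 1
      · intro x
        exact hgen n hsmall ⟨z, hz⟩ x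
      · rcases lt_or_gt_of_ne (show n ≠ 0 by omega) with hneg | hpos
        · have h1 : (1 : ℤ) ≤ -n - 1 := by omega
          have hspan := A.span_neg (-n - 1) h1
          rw [show -(-n - 1) - 1 = n by ring, show -(-n - 1) = n + 1 by ring] at hspan
          have hz' : z ∈ Submodule.span k
              {w : L | ∃ x ∈ A.grading (-1), ∃ y ∈ A.grading (n + 1), w = ⁅x, y⁆} := by
            rw [← hspan]; exact hz
          refine Submodule.span_induction ?_ ?_ ?_ ?_ hz'
          · rintro w ⟨xv, hxv, yv, hyv, rfl⟩
            exact Pbr xv yv (ih 1 (by omega) (-1) (by omega) xv hxv)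
              (ih (n + 1).natAbs (by omega) (n + 1) rfl yv hyv)
          · exact Pzero
          · intro w1 w2 _ _ hw1 hw2; exact Padd w1 w2 hw1 hw2
          · intro t w _ hw; exact Psmul t w hw
        · have h1 : (1 : ℤ) ≤ n - 1 := by omega
          have hspan := A.span_pos (n - 1) h1
          rw [show n - 1 + 1 = n by ring] at hspan
          have hz' : z ∈ Submodule.span k
              {w : L | ∃ x ∈ A.grading 1, ∃ y ∈ A.grading (n - 1), w = ⁅x, y⁆} := by
            rw [← hspan]; exact hz
          refine Submodule.span_induction ?_ ?_ ?_ ?_ hz'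
          · rintro w ⟨xv, hxv, yv, hyv, rfl⟩
            exact Pbr xv yv (ih 1 (by omega) 1 (by omega) xv hxv)
              (ih (n - 1).natAbs (by omega) (n - 1) rfl yv hyv)
          · exact Pzero
          · intro w1 w2 _ _ hw1 hw2; exact Padd w1 w2 hw1 hw2
          · intro t w _ hw; exact Psmul t w hw
  have hder : ∀ x y : L, α ⁅x, y⁆ = ⁅α x, y⁆ + ⁅x, α y⁆ := by
    intro x y
    have hy : y ∈ ⨆ n, A.grading n := by
      rw [A.isInternal.submodule_iSup_eq_top]; trivial
    refine Submodule.iSup_induction (motive := fun y => ∀ x : L,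
      α ⁅x, y⁆ = ⁅α x, y⁆ + ⁅x, α y⁆) A.grading hy ?_ Pzero ?_ x
    · intro i z hz
      exact hsub i z hz
    · intro y1 y2 hy1 hy2
      exact Padd y1 y2 hy1 hy2
  refine ⟨α, hder, ?_, ?_, ?_⟩
  · intro a; rw [hα 0 a]; exact hg0 a
  · intro a; rw [hα 1 a]; exact hg1 a
  · intro a; rw [hα (-1) a]; exact hgm a
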